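/- Suppose ν ∈ ℝ^m and μ ∈ ℝ^n have all entries strictly positive and T_E(ν,μ) is nonempty. Then (i) for every x ∈ T_E(ν,μ), the number of connected components of the support graph G(B(x)) is at least the ERP number of T_E(ν,μ); and (ii) there exists x ∈ T_E(ν,μ) such that the number of connected components of G(B(x)) equals the ERP number of T_E(ν,μ). -/

import Mathlib

open scoped Classical

noncomputable section

variable {m n : ℕ}

/-- The transportation polytope `T_E(ν,μ)`: nonnegative `m × n` matrices with row sums `ν`,
column sums `μ`, supported on the edge set `E`. -/
def transportationPolytope (ν : Fin m → ℝ) (μ : Fin n → ℝ)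
    (E : Finset (Fin m × Fin n)) : Set (Fin m → Fin n → ℝ) :=
  {x | (∀ i j, 0 ≤ x i j) ∧ (∀ i, ∑ j, x i j = ν i) ∧
    (∀ j, ∑ i, x i j = μ j) ∧ ∀ i j, (i, j) ∉ E → x i j = 0}

/-- The neighborhood `N_F(S) = {j : ∃ i ∈ S, (i,j) ∈ F}`. -/
def nbr (F : Finset (Fin m × Fin n)) (S : Finset (Fin m)) : Finset (Fin n) :=
  Finset.univ.filter fun j => ∃ i ∈ S, (i, j) ∈ F

/-- `ν` satisfies the capacity condition for `(μ, E)`. -/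
def capacityCond (ν : Fin m → ℝ) (μ : Fin n → ℝ) (E : Finset (Fin m × Fin n)) : Prop :=
  ∀ S : Finset (Fin m), ∑ i ∈ S, ν i ≤ ∑ j ∈ nbr E S, μ j

/-- The CRP condition for `(ν, μ, E)`. -/
def crpCond (ν : Fin m → ℝ) (μ : Fin n → ℝ) (E : Finset (Fin m × Fin n)) : Prop :=
  (∑ i, ν i) = (∑ j, μ j) ∧
  ∀ S : Finset (Fin m), S.Nonempty → S ≠ Finset.univ →
    ∑ i ∈ S, ν i < ∑ j ∈ nbr E S, μ j

/-- The bipartite simple graph `G(F)` on `I ⊔ J` determined by the edge set `F`. -/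
def bipartiteGraph (F : Finset (Fin m × Fin n)) : SimpleGraph (Fin m ⊕ Fin n) :=
  SimpleGraph.fromRel fun u v => ∃ i j, u = Sum.inl i ∧ v = Sum.inr j ∧ (i, j) ∈ F

/-- The number of connected components of `G(F)`. -/
def numComponents (F : Finset (Fin m × Fin n)) : ℕ :=
  Nat.card (bipartiteGraph F).ConnectedComponent

/-- The set `E_r` of redundant edges of `T_E(ν,μ)`. -/
def redundantEdges (ν : Fin m → ℝ) (μ : Fin n → ℝ)
    (E : Finset (Fin m × Fin n)) : Finset (Fin m × Fin n) :=
  E.filter fun e => ∀ x ∈ transportationPolytope ν μ E, x e.1 e.2 = 0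

/-- The ERP number of `T_E(ν,μ)`: the number of connected components of `G(E ∖ E_r)`. -/
def erpNumber (ν : Fin m → ℝ) (μ : Fin n → ℝ) (E : Finset (Fin m × Fin n)) : ℕ :=
  numComponents (E \ redundantEdges ν μ E)

/-- The support edge set `B(x) = {(i,j) ∈ E : x_{ij} > 0}`. -/
def supportEdges (E : Finset (Fin m × Fin n)) (x : Fin m → Fin n → ℝ) :
    Finset (Fin m × Fin n) :=
  E.filter fun e => 0 < x e.1 e.2

/-- The indicator vector `𝟙_S ∈ ℝ^m` of `S ⊆ I`. -/
def indicatorVec (S : Finset (Fin m)) : Fin m → ℝ := fun i => if i ∈ S then 1 else 0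

/-- `S ⊆ I` is binding if `∑_{i∈S} ν_i = ∑_{j∈N_E(S)} μ_j`. -/
def IsBinding (ν : Fin m → ℝ) (μ : Fin n → ℝ) (E : Finset (Fin m × Fin n))
    (S : Finset (Fin m)) : Prop :=
  (∑ i ∈ S, ν i) = ∑ j ∈ nbr E S, μ j

/-- The greatest common divisor of all `m + n` components of `ν` and `μ`. -/
def gcdVec (ν : Fin m → ℕ) (μ : Fin n → ℕ) : ℕ :=
  Nat.gcd (Finset.univ.gcd ν) (Finset.univ.gcd μ)

/-- `d_⋆ = max {1, m + n − (∑ᵢ νᵢ) / gcd(ν,μ)}`. -/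
def dStar (ν : Fin m → ℕ) (μ : Fin n → ℕ) : ℕ :=
  max 1 (m + n - (∑ i, ν i) / gcdVec ν μ)

/-- The CRP-gap `δ_F(ν,μ)` of the edge set `F` (computed with respect to the redundant
edges of `T_F(ν,μ)`). -/
def crpGap (ν : Fin m → ℝ) (μ : Fin n → ℝ) (F : Finset (Fin m × Fin n)) : ℝ :=
  sInf {t : ℝ | ∃ C : Finset (Fin m),
    (∑ i ∈ C, ν i) < (∑ j ∈ nbr (F \ redundantEdges ν μ F) C, μ j) ∧
    t = (∑ j ∈ nbr F C, μ j) - ∑ i ∈ C, ν i}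

/-- The CRP-graph relation `R` on the connected components of `G(E ∖ E_r)`:
`R c₁ c₂` holds iff `c₁ ≠ c₂` and some edge `(i,j) ∈ E` has `i` in the demand side of `c₁`
and `j` in the supply side of `c₂`. -/
def crpRel (ν : Fin m → ℝ) (μ : Fin n → ℝ) (E : Finset (Fin m × Fin n)) :
    (bipartiteGraph (E \ redundantEdges ν μ E)).ConnectedComponent →
    (bipartiteGraph (E \ redundantEdges ν μ E)).ConnectedComponent → Prop :=
  fun c₁ c₂ => c₁ ≠ c₂ ∧ ∃ i j, (i, j) ∈ E ∧
    (bipartiteGraph (E \ redundantEdges ν μ E)).connectedComponentMk (Sum.inl i) = c₁ ∧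
    (bipartiteGraph (E \ redundantEdges ν μ E)).connectedComponentMk (Sum.inr j) = c₂

end

lemma bipartiteGraph_mono {m n : ℕ} {F F' : Finset (Fin m × Fin n)} (h : F ⊆ F') :
    bipartiteGraph F ≤ bipartiteGraph F' := by
  intro u v huv
  simp only [bipartiteGraph, SimpleGraph.fromRel_adj] at *
  obtain ⟨hne, h'⟩ := huv
  exact ⟨hne, h'.imp (fun ⟨i, j, h1, h2, h3⟩ => ⟨i, j, h1, h2, h h3⟩)
    (fun ⟨i, j, h1, h2, h3⟩ => ⟨i, j, h1, h2, h h3⟩)⟩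

lemma numComponents_mono {m n : ℕ} {F F' : Finset (Fin m × Fin n)} (h : F ⊆ F') :
    numComponents F' ≤ numComponents F := by
  have hle := bipartiteGraph_mono h
  apply Nat.card_le_card_of_surjective
    (SimpleGraph.ConnectedComponent.map (SimpleGraph.Hom.ofLE hle))
  intro c
  refine SimpleGraph.ConnectedComponent.ind (fun v => ?_) c
  exact ⟨(bipartiteGraph F).connectedComponentMk v, rfl⟩

/-- every support graph has at least ERP-number many connected components, and
some `x ∈ T_E(ν,μ)` achieves exactly the ERP number. -/
theorem stmt_5 {m n : ℕ} (hm : 1 ≤ m) (hn : 1 ≤ n)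
    (ν : Fin m → ℝ) (μ : Fin n → ℝ) (E : Finset (Fin m × Fin n))
    (hν : ∀ i, 0 < ν i) (hμ : ∀ j, 0 < μ j)
    (hne : (transportationPolytope ν μ E).Nonempty) :
    (∀ x ∈ transportationPolytope ν μ E,
      erpNumber ν μ E ≤ numComponents (supportEdges E x)) ∧
    (∃ x ∈ transportationPolytope ν μ E,
      numComponents (supportEdges E x) = erpNumber ν μ E) := by
  classical
  set F := E \ redundantEdges ν μ E with hF
  have hFE : F ⊆ E := Finset.sdiff_subset
  have hsupp : ∀ x ∈ transportationPolytope ν μ E, supportEdges E x ⊆ F := by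
    intro x hx e he
    simp only [supportEdges, Finset.mem_filter] at he
    simp only [hF, Finset.mem_sdiff, redundantEdges, Finset.mem_filter]
    exact ⟨he.1, fun hr => absurd (hr.2 x hx) (ne_of_gt he.2)⟩
  refine ⟨fun x hx => numComponents_mono (hsupp x hx), ?_⟩
  -- construct x with support = F
  obtain ⟨x0, hx0⟩ := hne
  have hex : ∀ e ∈ F, ∃ x ∈ transportationPolytope ν μ E, 0 < x e.1 e.2 := by
    intro e he
    simp only [hF, Finset.mem_sdiff, redundantEdges, Finset.mem_filter, not_and] at he
    obtain ⟨heE, hne'⟩ := he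
    push_neg at hne'
    obtain ⟨x, hxT, hxne⟩ := hne' heE
    exact ⟨x, hxT, lt_of_le_of_ne (hxT.1 e.1 e.2) (Ne.symm hxne)⟩
  set g : (Fin m × Fin n) → (Fin m → Fin n → ℝ) :=
    fun e => if h : e ∈ F then (hex e h).choose else x0 with hg
  have hgT : ∀ e, g e ∈ transportationPolytope ν μ E := by
    intro e
    simp only [hg]
    split
    · exact (hex e ‹_›).choose_spec.1
    · exact hx0
  have hgpos : ∀ e ∈ F, 0 < g e e.1 e.2 := by
    intro e he
    simp only [hg, dif_pos he]
    exact (hex e he).choose_spec.2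
  rcases eq_or_ne F ∅ with hFe | hFne
  · refine ⟨x0, hx0, ?_⟩
    have : supportEdges E x0 = F := by
      have h1 := hsupp x0 hx0
      rw [hFe] at h1 ⊢
      exact Finset.subset_empty.mp h1
    rw [erpNumber, ← hF, this]
  · have hNpos : (0 : ℝ) < (F.card : ℝ) := by
      have : 0 < F.card := Finset.card_pos.mpr (Finset.nonempty_iff_ne_empty.mpr hFne)
      exact_mod_cast this
    set y : Fin m → Fin n → ℝ := fun i j => (∑ e ∈ F, g e i j) / F.card with hy
    have hyT : y ∈ transportationPolytope ν μ E := by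
      refine ⟨?_, ?_, ?_, ?_⟩
      · intro i j
        apply div_nonneg _ hNpos.le
        exact Finset.sum_nonneg fun e _ => (hgT e).1 i j
      · intro i
        simp only [hy]
        rw [← Finset.sum_div, Finset.sum_comm]
        have : ∀ e ∈ F, ∑ j, g e i j = ν i := fun e _ => (hgT e).2.1 i
        rw [Finset.sum_congr rfl this, Finset.sum_const, nsmul_eq_mul]; field_simp
      · intro j
        simp only [hy]
        rw [← Finset.sum_div, Finset.sum_comm]
        have : ∀ e ∈ F, ∑ i, g e i j = μ j := fun e _ => (hgT e).2.2.1 j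
        rw [Finset.sum_congr rfl this, Finset.sum_const, nsmul_eq_mul]; field_simp
      · intro i j hij
        simp only [hy]
        rw [Finset.sum_congr rfl fun e _ => (hgT e).2.2.2 i j hij,
          Finset.sum_const, smul_zero, zero_div]
    have hsy : supportEdges E y = F := by
      apply Finset.Subset.antisymm (hsupp y hyT)
      intro e he
      simp only [supportEdges, Finset.mem_filter]
      refine ⟨hFE he, ?_⟩
      apply div_pos _ hNpos
      exact Finset.sum_pos' (fun e' _ => (hgT e').1 e.1 e.2) ⟨e, he, hgpos e he⟩
    exact ⟨y, hyT, by rw [hsy, erpNumber, ← hF]⟩
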